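/- A symmetric function f : Gⁿ → G (invariant under all permutations of its arguments) is n-ary associative if and only if f(f(x₁,...,xₙ),x_{n+1},...,x_{2n-1}) = f(x₁,f(x₂,...,x_{n+1}),x_{n+2},...,x_{2n-1}) for all x₁,...,x_{2n-1} ∈ G. -/

import Mathlib

/-- Substituting `f` applied to the window `x_i, ..., x_{i+n-1}` into slot `i`
of `f` applied to the remaining outer variables among `x_1, ..., x_{2n-1}`. -/
def nestAt {R : Type*} (n : ℕ) (f : (Fin n → R) → R) (i : Fin n)
    (x : Fin (2 * n - 1) → R) : R :=
  f (fun j =>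
    if (j : ℕ) < (i : ℕ) then x ⟨j, by have := j.isLt; have := i.isLt; omega⟩
    else if (j : ℕ) = (i : ℕ) then
      f (fun k => x ⟨(i : ℕ) + (k : ℕ), by have := k.isLt; have := i.isLt; omega⟩)
    else x ⟨(j : ℕ) + n - 1, by have := j.isLt; have := i.isLt; omega⟩)

/-- `f` is `n`-ary associative: all the bracketings coincide. -/
def IsNAssoc {R : Type*} (n : ℕ) (f : (Fin n → R) → R) : Prop :=
  ∀ i j : Fin n, ∀ x : Fin (2 * n - 1) → R, nestAt n f i x = nestAt n f j x


def tauN (n i j : ℕ) : ℕ := if j ≤ n then i + j else if j < n + 1 + i then j - (n + 1) else j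

lemma tauN_lt (n i j : ℕ) (hi : i + 1 < n) (hj : j < 2 * n - 1) : tauN n i j < 2 * n - 1 := by
  unfold tauN; split_ifs <;> omega

def sigN (n i j : ℕ) : ℕ :=
  if j = i then 0 else if j = i + 1 then 1 else if j < i then j + 2 else j

set_option maxHeartbeats 1600000 in
lemma step_lemma {G : Type*} {n : ℕ} (hn : 2 ≤ n) (f : (Fin n → G) → G)
    (hsym : ∀ (σ : Equiv.Perm (Fin n)) (x : Fin n → G), f (x ∘ σ) = f x)
    (h01 : ∀ x : Fin (2 * n - 1) → G,
        nestAt n f ⟨0, Nat.lt_of_lt_of_le (by decide) hn⟩ x = nestAt n f ⟨1, Nat.lt_of_lt_of_le (by decide) hn⟩ x)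
    (i : ℕ) (hi : i + 1 < n) (x : Fin (2 * n - 1) → G) :
    nestAt n f ⟨i, by omega⟩ x = nestAt n f ⟨i + 1, hi⟩ x := by
  set y : Fin (2 * n - 1) → G :=
    fun j => x ⟨tauN n i j, tauN_lt n i j hi j.isLt⟩ with hy
  have hblt : ∀ j : Fin n, sigN n i j < n := by
    intro j; have := j.isLt; unfold sigN; split_ifs <;> omega
  set e : Fin n → Fin n := fun j => ⟨sigN n i j, hblt j⟩ with he
  have einj : Function.Injective e := by
    intro a b hab
    have hv : sigN n i a = sigN n i b := congrArg Fin.val hab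
    have ha := a.isLt; have hb := b.isLt
    unfold sigN at hv
    apply Fin.ext
    split_ifs at hv <;> omega
  set σ : Equiv.Perm (Fin n) := Equiv.ofBijective e (Finite.injective_iff_bijective.mp einj)
    with hσ
  have hA : nestAt n f ⟨0, by omega⟩ y = nestAt n f ⟨i, by omega⟩ x := by
    unfold nestAt
    refine Eq.trans (hsym σ _).symm (congrArg f (funext fun j => ?_))
    obtain ⟨j, hj⟩ := j
    rcases Nat.lt_trichotomy j i with hr | hr | hr
    · -- j < i
      have hee : σ ⟨j, hj⟩ = ⟨j + 2, by omega⟩ :=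
        Fin.ext (show sigN n i j = j + 2 by unfold sigN; split_ifs <;> omega)
      simp only [Function.comp_apply]
      rw [hee]
      simp only [hy]
      split_ifs <;>
        first
          | omega
          | (exfalso; assumption)
          | (exfalso; omega)
          | exact congrArg x (by simp only [Fin.mk.injEq]; unfold tauN; split_ifs <;> omega)
          | (refine congrArg f (funext fun k => congrArg x ?_);
             have := k.isLt; simp only [Fin.mk.injEq]; unfold tauN; split_ifs <;> omega)
    · -- j = i
      have hee : σ ⟨j, hj⟩ = ⟨0, by omega⟩ :=
        Fin.ext (show sigN n i j = 0 by unfold sigN; split_ifs <;> omega)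
      simp only [Function.comp_apply]
      rw [hee]
      simp only [hy]
      split_ifs <;>
        first
          | omega
          | (exfalso; assumption)
          | (exfalso; omega)
          | exact congrArg x (by simp only [Fin.mk.injEq]; unfold tauN; split_ifs <;> omega)
          | (refine congrArg f (funext fun k => congrArg x ?_);
             have := k.isLt; simp only [Fin.mk.injEq]; unfold tauN; split_ifs <;> omega)
    · rcases Nat.lt_or_ge j (i + 1 + 1) with hr2 | hr2
      · -- j = i + 1
        have hee : σ ⟨j, hj⟩ = ⟨1, by omega⟩ :=
          Fin.ext (show sigN n i j = 1 by unfold sigN; split_ifs <;> omega)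
        simp only [Function.comp_apply]
        rw [hee]
        simp only [hy]
        split_ifs <;>
          first
            | omega
            | (exfalso; assumption)
            | (exfalso; omega)
            | exact congrArg x (by simp only [Fin.mk.injEq]; unfold tauN; split_ifs <;> omega)
            | (refine congrArg f (funext fun k => congrArg x ?_);
                 have := k.isLt; simp only [Fin.mk.injEq]; unfold tauN; split_ifs <;> omega)
      · -- j > i + 1
        have hee : σ ⟨j, hj⟩ = ⟨j, by omega⟩ :=
          Fin.ext (show sigN n i j = j by unfold sigN; split_ifs <;> omega)
        simp only [Function.comp_apply]
        rw [hee]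
        simp only [hy]
        split_ifs <;>
          first
            | omega
            | (exfalso; assumption)
            | (exfalso; omega)
            | exact congrArg x (by simp only [Fin.mk.injEq]; unfold tauN; split_ifs <;> omega)
            | (refine congrArg f (funext fun k => congrArg x ?_);
                 have := k.isLt; simp only [Fin.mk.injEq]; unfold tauN; split_ifs <;> omega)

  have hB : nestAt n f ⟨1, by omega⟩ y = nestAt n f ⟨i + 1, hi⟩ x := by
    unfold nestAt
    refine Eq.trans (hsym σ _).symm (congrArg f (funext fun j => ?_))
    obtain ⟨j, hj⟩ := j
    rcases Nat.lt_trichotomy j i with hr | hr | hr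
    · -- j < i
      have hee : σ ⟨j, hj⟩ = ⟨j + 2, by omega⟩ :=
        Fin.ext (show sigN n i j = j + 2 by unfold sigN; split_ifs <;> omega)
      simp only [Function.comp_apply]
      rw [hee]
      simp only [hy]
      split_ifs <;>
        first
          | omega
          | (exfalso; assumption)
          | (exfalso; omega)
          | exact congrArg x (by simp only [Fin.mk.injEq]; unfold tauN; split_ifs <;> omega)
          | (refine congrArg f (funext fun k => congrArg x ?_);
             have := k.isLt; simp only [Fin.mk.injEq]; unfold tauN; split_ifs <;> omega)
    · -- j = i
      have hee : σ ⟨j, hj⟩ = ⟨0, by omega⟩ :=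
        Fin.ext (show sigN n i j = 0 by unfold sigN; split_ifs <;> omega)
      simp only [Function.comp_apply]
      rw [hee]
      simp only [hy]
      split_ifs <;>
        first
          | omega
          | (exfalso; assumption)
          | (exfalso; omega)
          | exact congrArg x (by simp only [Fin.mk.injEq]; unfold tauN; split_ifs <;> omega)
          | (refine congrArg f (funext fun k => congrArg x ?_);
             have := k.isLt; simp only [Fin.mk.injEq]; unfold tauN; split_ifs <;> omega)
    · rcases Nat.lt_or_ge j (i + 1 + 1) with hr2 | hr2
      · -- j = i + 1
        have hee : σ ⟨j, hj⟩ = ⟨1, by omega⟩ :=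
          Fin.ext (show sigN n i j = 1 by unfold sigN; split_ifs <;> omega)
        simp only [Function.comp_apply]
        rw [hee]
        simp only [hy]
        split_ifs <;>
          first
            | omega
            | (exfalso; assumption)
            | (exfalso; omega)
            | exact congrArg x (by simp only [Fin.mk.injEq]; unfold tauN; split_ifs <;> omega)
            | (refine congrArg f (funext fun k => congrArg x ?_);
                 have := k.isLt; simp only [Fin.mk.injEq]; unfold tauN; split_ifs <;> omega)
      · -- j > i + 1
        have hee : σ ⟨j, hj⟩ = ⟨j, by omega⟩ :=
          Fin.ext (show sigN n i j = j by unfold sigN; split_ifs <;> omega)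
        simp only [Function.comp_apply]
        rw [hee]
        simp only [hy]
        split_ifs <;>
          first
            | omega
            | (exfalso; assumption)
            | (exfalso; omega)
            | exact congrArg x (by simp only [Fin.mk.injEq]; unfold tauN; split_ifs <;> omega)
            | (refine congrArg f (funext fun k => congrArg x ?_);
                 have := k.isLt; simp only [Fin.mk.injEq]; unfold tauN; split_ifs <;> omega)

  rw [← hA, ← hB, h01]

theorem stmt_12 {G : Type*} (n : ℕ) (hn : 2 ≤ n) (f : (Fin n → G) → G)
    (hsym : ∀ (σ : Equiv.Perm (Fin n)) (x : Fin n → G), f (x ∘ σ) = f x) :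
    IsNAssoc n f ↔
      ∀ x : Fin (2 * n - 1) → G,
        nestAt n f ⟨0, by omega⟩ x = nestAt n f ⟨1, by omega⟩ x := by
  constructor
  · intro h x; exact h _ _ x
  · intro h i j x
    have base : ∀ k (hk : k < n), nestAt n f ⟨k, hk⟩ x = nestAt n f ⟨0, by omega⟩ x := by
      intro k
      induction k with
      | zero => intro _; rfl
      | succ m ih =>
          intro hk
          rw [← step_lemma hn f hsym h m hk x]
          exact ih (by omega)
    obtain ⟨i, hi⟩ := i; obtain ⟨j, hj⟩ := j
    rw [base i hi, base j hj]
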